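/- arXiv:2510.20081 — 5 statements merged into one kernel-verified Lean document; each statement's English description precedes it below -/
import Mathlib

section
/- Let α : ℝ → ℝ be a locally Lipschitz function with α(0) = 0 that is strictly increasing, and let y : [0,∞) → ℝ be differentiable with y(0) ≥ 0 and y'(t) ≥ -α(y(t)) for all t ≥ 0. Then y(t) ≥ 0 for all t ≥ 0. -/
/-- Scalar comparison principle: if `y' t ≥ -α (y t)` with `α` locally Lipschitz,
strictly increasing, `α 0 = 0`, and `y 0 ≥ 0`, then `y` stays nonnegative. -/
theorem stmt_0 (α : ℝ → ℝ) (hα_lip : LocallyLipschitz α) (hα0 : α 0 = 0)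
    (hα_mono : StrictMono α) (y y' : ℝ → ℝ)
    (hy_deriv : ∀ t ≥ (0 : ℝ), HasDerivWithinAt y (y' t) (Set.Ici 0) t)
    (hy0 : 0 ≤ y 0)
    (hy' : ∀ t ≥ (0 : ℝ), y' t ≥ -α (y t)) :
    ∀ t ≥ (0 : ℝ), 0 ≤ y t := by
  by_contra h
  push_neg at h
  obtain ⟨t₁, ht₁0, ht₁⟩ := h
  -- y is continuous on [0, ∞)
  have hcont : ContinuousOn y (Set.Ici 0) := fun t ht =>
    (hy_deriv t ht).continuousWithinAt
  -- the set of times in [0, t₁] where y ≥ 0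
  set S : Set ℝ := {t | t ∈ Set.Icc 0 t₁ ∧ 0 ≤ y t} with hS
  have hS0 : (0 : ℝ) ∈ S := ⟨⟨le_refl 0, ht₁0⟩, hy0⟩
  have hSne : S.Nonempty := ⟨0, hS0⟩
  have hSbdd : BddAbove S := ⟨t₁, fun x hx => hx.1.2⟩
  have hSclosed : IsClosed S := by
    have h1 : IsClosed {t | t ∈ Set.Icc 0 t₁ ∧ 0 ≤ y t} := by
      have : {t | t ∈ Set.Icc 0 t₁ ∧ 0 ≤ y t} =
          Set.Icc 0 t₁ ∩ (Set.Icc 0 t₁ ∩ y ⁻¹' Set.Ici 0) := by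
        ext x
        simp only [Set.mem_setOf_eq, Set.mem_inter_iff, Set.mem_preimage, Set.mem_Ici]
        tauto
      rw [this]
      exact isClosed_Icc.inter
        ((hcont.mono (Set.Icc_subset_Ici_self)).preimage_isClosed_of_isClosed
          isClosed_Icc isClosed_Ici)
    exact h1
  set s := sSup S with hs
  have hsS : s ∈ S := hSclosed.csSup_mem hSne hSbdd
  have hs0 : (0 : ℝ) ≤ s := le_csSup hSbdd hS0
  have hst₁ : s ≤ t₁ := csSup_le hSne fun x hx => hx.1.2
  have hslt : s < t₁ := by
    rcases lt_or_eq_of_le hst₁ with h | h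
    · exact h
    · exfalso; rw [h] at hsS; exact absurd hsS.2 (not_le.mpr ht₁)
  -- on (s, t₁], y < 0
  have hneg : ∀ c ∈ Set.Ioo s t₁, y c < 0 := by
    intro c hc
    by_contra hyc
    push_neg at hyc
    have : c ∈ S := ⟨⟨hs0.trans hc.1.le, hc.2.le⟩, hyc⟩
    exact absurd (le_csSup hSbdd this) (not_le.mpr hc.1)
  -- MVT on [s, t₁]
  have hderiv : ∀ c ∈ Set.Ioo s t₁, HasDerivAt y (y' c) c := by
    intro c hc
    have hc0 : 0 < c := lt_of_le_of_lt hs0 hc.1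
    exact (hy_deriv c hc0.le).hasDerivAt (Ici_mem_nhds hc0)
  obtain ⟨c, hc, hceq⟩ := exists_hasDerivAt_eq_slope y y' hslt
    (hcont.mono fun x hx => le_trans hs0 hx.1) hderiv
  -- at c, y c < 0, so α (y c) < 0, so y' c > 0
  have h1 : α (y c) < 0 := hα0 ▸ hα_mono (hneg c hc)
  have h2 : 0 < y' c := lt_of_lt_of_le (neg_pos.mpr h1) (hy' c (hs0.trans hc.1.le))
  have h3 : (y t₁ - y s) / (t₁ - s) > 0 := hceq ▸ h2
  have h4 : 0 < t₁ - s := sub_pos.mpr hslt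
  have h5 : 0 < y t₁ - y s := by
    have := (div_pos_iff).mp h3
    rcases this with ⟨h, _⟩ | ⟨_, h⟩
    · exact h
    · linarith
  linarith [hsS.2]
end

section
/- Let f_cl : ℝⁿ × [0,∞) → ℝⁿ be locally Lipschitz in its first argument and piecewise continuous in its second, let h : ℝⁿ → ℝ be continuously differentiable, and let α : ℝ → ℝ be a locally Lipschitz, strictly increasing function with α(0) = 0. Suppose ⟨∇h(z), f_cl(z,t)⟩ ≥ -α(h(z)) for all z ∈ ℝⁿ and all t ≥ 0. Then every solution x : [0,∞) → ℝⁿ of the initial value problem ẋ(t) = f_cl(x(t),t) with h(x(0)) ≥ 0 satisfies h(x(t)) ≥ 0 for all t ≥ 0. -/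
/-- CBF forward-invariance theorem: if `⟪∇h z, f_cl z t⟫ ≥ -α (h z)` everywhere,
then the set `{z | h z ≥ 0}` is forward invariant for `ẋ = f_cl (x, t)`. -/
theorem stmt_1 {n : ℕ}
    (f_cl : EuclideanSpace ℝ (Fin n) → ℝ → EuclideanSpace ℝ (Fin n))
    -- locally Lipschitz in the first argument
    (hf_lip : ∀ t ≥ (0 : ℝ), LocallyLipschitz fun z => f_cl z t)
    -- piecewise continuous in the second argument
    (hf_pc : ∀ z, ∃ D : Set ℝ, D.Countable ∧ ∀ t ∉ D, ContinuousAt (f_cl z) t)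
    (h : EuclideanSpace ℝ (Fin n) → ℝ) (hh : ContDiff ℝ 1 h)
    (α : ℝ → ℝ) (hα_lip : LocallyLipschitz α) (hα_mono : StrictMono α)
    (hα0 : α 0 = 0)
    (hcbf : ∀ z, ∀ t ≥ (0 : ℝ),
      @inner ℝ _ _ (gradient h z) (f_cl z t) ≥ -α (h z))
    (x : ℝ → EuclideanSpace ℝ (Fin n))
    (hx : ∀ t ≥ (0 : ℝ), HasDerivWithinAt x (f_cl (x t) t) (Set.Ici 0) t)
    (hx0 : 0 ≤ h (x 0)) :
    ∀ t ≥ (0 : ℝ), 0 ≤ h (x t) := by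
  set y : ℝ → ℝ := fun t => h (x t) with hy
  have hdiff : ∀ z, DifferentiableAt ℝ h z := fun z =>
    (hh.differentiable one_ne_zero).differentiableAt
  -- derivative of y within Ici 0
  have hyderiv : ∀ t ≥ (0 : ℝ),
      HasDerivWithinAt y (@inner ℝ _ _ (gradient h (x t)) (f_cl (x t) t))
        (Set.Ici 0) t := by
    intro t ht
    have hfd : HasFDerivAt h (fderiv ℝ h (x t)) (x t) := (hdiff (x t)).hasFDerivAt
    have hcomp := hfd.comp_hasDerivWithinAt t (hx t ht)
    have heq : fderiv ℝ h (x t) (f_cl (x t) t)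
        = @inner ℝ _ _ (gradient h (x t)) (f_cl (x t) t) := by
      have h1 : fderiv ℝ h (x t)
          = InnerProductSpace.toDual ℝ _ (gradient h (x t)) := by
        simp [gradient]
      rw [h1, InnerProductSpace.toDual_apply_apply]
    rwa [heq] at hcomp
  -- continuity of y on Ici 0
  have hxcont : ContinuousOn x (Set.Ici 0) := fun t ht =>
    (hx t ht).continuousWithinAt
  have hycont : ContinuousOn y (Set.Ici 0) :=
    hh.continuous.comp_continuousOn hxcont
  intro t₁ ht₁
  by_contra hneg
  push_neg at hneg
  -- the set of times ≤ t₁ where y ≥ 0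
  set A : Set ℝ := Set.Icc (0:ℝ) t₁ ∩ y ⁻¹' Set.Ici 0 with hA
  have hA0 : (0:ℝ) ∈ A := ⟨⟨le_rfl, ht₁⟩, hx0⟩
  have hAne : A.Nonempty := ⟨0, hA0⟩
  have hAbdd : BddAbove A := ⟨t₁, fun a ha => ha.1.2⟩
  have hAclosed : IsClosed A :=
    (hycont.mono Set.Icc_subset_Ici_self).preimage_isClosed_of_isClosed
      isClosed_Icc isClosed_Ici
  set s := sSup A with hs
  have hsA : s ∈ A := hAclosed.csSup_mem hAne hAbdd
  have hs0 : (0:ℝ) ≤ s := hsA.1.1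
  have hst₁ : s ≤ t₁ := hsA.1.2
  have hys : 0 ≤ y s := hsA.2
  have hslt : s < t₁ := by
    rcases lt_or_eq_of_le hst₁ with h' | h'
    · exact h'
    · rw [h'] at hys; linarith
  -- y is negative on (s, t₁]
  have hyneg : ∀ t, s < t → t ≤ t₁ → y t < 0 := by
    intro t hst htt₁
    by_contra hge
    push_neg at hge
    have : t ∈ A := ⟨⟨hs0.trans hst.le, htt₁⟩, hge⟩
    exact absurd (le_csSup hAbdd this) (not_le.mpr hst)
  -- y is strictly increasing on [s, t₁]
  have hmono : StrictMonoOn y (Set.Icc s t₁) := by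
    apply strictMonoOn_of_deriv_pos (convex_Icc s t₁)
      (hycont.mono (Set.Icc_subset_Ici_self.trans
        (Set.Ici_subset_Ici.mpr hs0)))
    intro t ht
    rw [interior_Icc] at ht
    have ht0 : (0:ℝ) < t := lt_of_le_of_lt hs0 ht.1
    have hda : HasDerivAt y (@inner ℝ _ _ (gradient h (x t)) (f_cl (x t) t)) t :=
      (hyderiv t ht0.le).hasDerivAt (Ici_mem_nhds ht0)
    rw [hda.deriv]
    have hyt : y t < 0 := hyneg t ht.1 ht.2.le
    have : α (y t) < 0 := by
      have := hα_mono hyt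
      rwa [hα0] at this
    calc (0:ℝ) < -α (y t) := by linarith
    _ ≤ _ := hcbf (x t) t ht0.le
  have := hmono ⟨le_rfl, hst₁⟩ ⟨hslt.le, le_rfl⟩ hslt
  linarith
end

section
/- Let f : ℝⁿ → ℝⁿ and g : ℝⁿ → ℝⁿˣᵐ be locally Lipschitz, let h : ℝⁿ → ℝ be continuously differentiable, let α : ℝ → ℝ be locally Lipschitz, strictly increasing with α(0) = 0, and let ε > 0. Let u : [0,∞) → ℝᵐ be piecewise continuous, let x : [0,∞) → ℝⁿ solve ẋ(t) = f(x(t)) + g(x(t))u(t), and let x̂ : [0,∞) → ℝⁿ be a function (a state estimate) satisfying ‖x(t) - x̂(t)‖ ≤ ε for all t ≥ 0. If for every t ≥ 0 the input satisfies the robust CBF condition ⟨∇h(z), f(z) + g(z)u(t)⟩ ≥ -α(h(z)) for all z in the closed ball B̄(x̂(t), ε), and if h(x(0)) ≥ 0, then h(x(t)) ≥ 0 for all t ≥ 0. -/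
attribute [local instance] Matrix.normedAddCommGroup

/-- Robust safety under bounded state-estimation error: if the robust CBF condition
holds on the ball of radius `ε` around the estimate `xhat t`, and the estimation error
is bounded by `ε`, then `h (x t) ≥ 0` is maintained. -/
theorem stmt_2 {n m : ℕ}
    (f : EuclideanSpace ℝ (Fin n) → EuclideanSpace ℝ (Fin n))
    (g : EuclideanSpace ℝ (Fin n) → Matrix (Fin n) (Fin m) ℝ)
    (hf_lip : LocallyLipschitz f) (hg_lip : LocallyLipschitz g)
    (h : EuclideanSpace ℝ (Fin n) → ℝ) (hh : ContDiff ℝ 1 h)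
    (α : ℝ → ℝ) (hα_lip : LocallyLipschitz α) (hα_mono : StrictMono α)
    (hα0 : α 0 = 0)
    (ε : ℝ) (hε : 0 < ε)
    (u : ℝ → Fin m → ℝ)
    -- piecewise continuity of the input
    (hu_pc : ∃ D : Set ℝ, D.Countable ∧ ∀ t ∉ D, ContinuousAt u t)
    (x xhat : ℝ → EuclideanSpace ℝ (Fin n))
    (hx : ∀ t ≥ (0 : ℝ), HasDerivWithinAt x
      (f (x t) + (EuclideanSpace.equiv (Fin n) ℝ).symm ((g (x t)).mulVec (u t)))
      (Set.Ici 0) t)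
    (hest : ∀ t ≥ (0 : ℝ), ‖x t - xhat t‖ ≤ ε)
    (hcbf : ∀ t ≥ (0 : ℝ), ∀ z ∈ Metric.closedBall (xhat t) ε,
      @inner ℝ _ _ (gradient h z)
        (f z + (EuclideanSpace.equiv (Fin n) ℝ).symm ((g z).mulVec (u t)))
        ≥ -α (h z))
    (hx0 : 0 ≤ h (x 0)) :
    ∀ t ≥ (0 : ℝ), 0 ≤ h (x t) := by
  intro t ht
  by_contra hneg
  push_neg at hneg
  set y : ℝ → ℝ := fun s => h (x s) with hy
  -- velocity field
  set v : ℝ → EuclideanSpace ℝ (Fin n) :=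
    fun s => f (x s) + (EuclideanSpace.equiv (Fin n) ℝ).symm ((g (x s)).mulVec (u s)) with hv
  -- derivative of y within Ici 0
  have hyderiv : ∀ s ≥ (0:ℝ), HasDerivWithinAt y (inner ℝ (gradient h (x s)) (v s)) (Set.Ici 0) s := by
    intro s hs
    have hgrad : HasGradientAt h (gradient h (x s)) (x s) :=
      (hh.differentiable one_ne_zero (x s)).hasGradientAt
    have hfd := hgrad.hasFDerivAt
    have := hfd.comp_hasDerivWithinAt s (hx s hs)
    simp [InnerProductSpace.toDual_apply_apply, hv] at this ⊢; exact this
  have hycont : ContinuousOn y (Set.Ici 0) := fun s hs =>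
    (hyderiv s hs).continuousWithinAt
  -- t > 0
  have ht0 : 0 < t := by
    rcases ht.lt_or_eq with h' | h'
    · exact h'
    · have h2 := hneg; rw [← h'] at h2; exact absurd hx0 (not_le.2 h2)
  -- the set where y ≥ 0 up to time t
  set A : Set ℝ := Set.Icc 0 t ∩ y ⁻¹' Set.Ici 0 with hA
  have hA_closed : IsClosed A := by
    apply ContinuousOn.preimage_isClosed_of_isClosed
      (hycont.mono (Set.Icc_subset_Ici_self)) isClosed_Icc isClosed_Ici
  have hA_ne : A.Nonempty := ⟨0, ⟨le_rfl, ht⟩, hx0⟩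
  have hA_bdd : BddAbove A := ⟨t, fun s hs => hs.1.2⟩
  set s₀ : ℝ := sSup A with hs₀
  have hs₀_mem : s₀ ∈ A := hA_closed.csSup_mem hA_ne hA_bdd
  have hs₀0 : 0 ≤ s₀ := hs₀_mem.1.1
  have hs₀t : s₀ ≤ t := hs₀_mem.1.2
  have hys₀ : 0 ≤ y s₀ := hs₀_mem.2
  have hs₀lt : s₀ < t := by
    rcases hs₀t.lt_or_eq with h' | h'
    · exact h'
    · have h2 := hneg; rw [← h'] at h2; exact absurd hys₀ (not_le.2 h2)
  -- y < 0 on (s₀, t]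
  have hyneg : ∀ s, s₀ < s → s ≤ t → y s < 0 := by
    intro s hs1 hs2
    by_contra hge
    push_neg at hge
    exact absurd (le_csSup hA_bdd ⟨⟨hs₀0.trans hs1.le, hs2⟩, hge⟩) (not_le.2 hs1)
  -- y is strictly monotone on [s₀, t]
  have hmono : StrictMonoOn y (Set.Icc s₀ t) := by
    apply strictMonoOn_of_deriv_pos (convex_Icc s₀ t)
    · exact hycont.mono (fun s hs => hs₀0.trans hs.1)
    · intro s hs
      rw [interior_Icc] at hs
      have hs0 : 0 < s := lt_of_le_of_lt hs₀0 hs.1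
      have hd : HasDerivAt y (inner ℝ (gradient h (x s)) (v s)) s :=
        (hyderiv s hs0.le).hasDerivAt (Ici_mem_nhds hs0)
      rw [hd.deriv]
      have hmem : x s ∈ Metric.closedBall (xhat s) ε := by
        rw [Metric.mem_closedBall, dist_eq_norm]
        exact hest s hs0.le
      have hc := hcbf s hs0.le (x s) hmem
      have hylt : y s < 0 := hyneg s hs.1 hs.2.le
      have : α (y s) < 0 := hα0 ▸ hα_mono hylt
      calc (0:ℝ) < -α (y s) := by linarith
        _ ≤ inner ℝ (gradient h (x s)) (v s) := hc
  have := hmono ⟨le_rfl, hs₀t⟩ ⟨hs₀lt.le, le_rfl⟩ hs₀lt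
  linarith
end

section
/- Let h : ℝⁿ → ℝ be continuously differentiable, f : ℝⁿ → ℝⁿ, g : ℝⁿ → ℝⁿˣᵐ, α : ℝ → ℝ, and fix x̂ ∈ ℝⁿ and ε > 0. Suppose F ∈ ℝ and G⁻, G⁺ ∈ ℝᵐ satisfy F ≤ ⟨∇h(z), f(z)⟩ + α(h(z)) and G⁻ᵢ ≤ [∇h(z)g(z)]ᵢ ≤ G⁺ᵢ for every z ∈ B̄(x̂, ε) and every i ∈ {1,…,m}. Then any u ∈ ℝᵐ satisfying F + Σᵢ min(G⁻ᵢuᵢ, G⁺ᵢuᵢ) ≥ 0 also satisfies ⟨∇h(z), f(z) + g(z)u⟩ ≥ -α(h(z)) for every z ∈ B̄(x̂, ε). -/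
lemma min_mul_le {a b c u : ℝ} (h1 : a ≤ c) (h2 : c ≤ b) :
    min (a * u) (b * u) ≤ c * u := by
  rcases le_total 0 u with hu | hu
  · exact le_trans (min_le_left _ _) (by nlinarith)
  · exact le_trans (min_le_right _ _) (by nlinarith)

/-- The nonsmooth QP constraint `F + ∑ i, min (G⁻ᵢ uᵢ) (G⁺ᵢ uᵢ) ≥ 0` implies the
CBF inequality at every point of the uncertainty ball `B̄(x̂, ε)`. -/
theorem stmt_4 {n m : ℕ}
    (h : EuclideanSpace ℝ (Fin n) → ℝ) (hh : ContDiff ℝ 1 h)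
    (f : EuclideanSpace ℝ (Fin n) → EuclideanSpace ℝ (Fin n))
    (g : EuclideanSpace ℝ (Fin n) → Matrix (Fin n) (Fin m) ℝ)
    (α : ℝ → ℝ)
    (xhat : EuclideanSpace ℝ (Fin n)) (ε : ℝ) (hε : 0 < ε)
    (F : ℝ) (Gminus Gplus : Fin m → ℝ)
    (hF : ∀ z ∈ Metric.closedBall xhat ε,
      F ≤ @inner ℝ _ _ (gradient h z) (f z) + α (h z))
    (hG : ∀ z ∈ Metric.closedBall xhat ε, ∀ i,
      Gminus i ≤ Matrix.vecMul (EuclideanSpace.equiv (Fin n) ℝ (gradient h z)) (g z) i ∧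
      Matrix.vecMul (EuclideanSpace.equiv (Fin n) ℝ (gradient h z)) (g z) i ≤ Gplus i)
    (u : Fin m → ℝ)
    (hu : 0 ≤ F + ∑ i, min (Gminus i * u i) (Gplus i * u i)) :
    ∀ z ∈ Metric.closedBall xhat ε,
      @inner ℝ _ _ (gradient h z)
        (f z + (EuclideanSpace.equiv (Fin n) ℝ).symm ((g z).mulVec u)) ≥ -α (h z) := by
  intro z hz
  have h1 := hF z hz
  have h2 := hG z hz
  set v := gradient h z with hv
  have key : @inner ℝ _ _ v (f z + (EuclideanSpace.equiv (Fin n) ℝ).symm ((g z).mulVec u))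
      = @inner ℝ _ _ v (f z)
        + ∑ i, Matrix.vecMul (EuclideanSpace.equiv (Fin n) ℝ v) (g z) i * u i := by
    rw [inner_add_right]
    congr 1
    simp only [PiLp.inner_apply, RCLike.inner_apply, conj_trivial, Matrix.vecMul,
      Matrix.mulVec, dotProduct, EuclideanSpace.equiv,
      PiLp.continuousLinearEquiv_symm_apply,
      PiLp.continuousLinearEquiv_apply,
      PiLp.toLp_apply]
    simp only [Finset.mul_sum, Finset.sum_mul]
    rw [Finset.sum_comm]
    apply Finset.sum_congr rfl
    intros; apply Finset.sum_congr rfl; intros; ring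
  rw [key]
  have hsum : ∑ i, min (Gminus i * u i) (Gplus i * u i)
      ≤ ∑ i, Matrix.vecMul (EuclideanSpace.equiv (Fin n) ℝ v) (g z) i * u i :=
    Finset.sum_le_sum fun i _ => min_mul_le (h2 i).1 (h2 i).2
  linarith
end

section
/- Let n, m, L ∈ ℕ, let x ∈ ℝⁿ, let f : ℝⁿ → ℝⁿ, g : ℝⁿ → ℝⁿˣᵐ, Q : ℝⁿ → ℝ, let R ∈ ℝᵐˣᵐ be symmetric positive definite, let σ : ℝⁿ → ℝ^L and ε : ℝⁿ → ℝ be continuously differentiable, and let W, Ŵ_c, Ŵ_a ∈ ℝ^L. Define G_R := g(x)R⁻¹g(x)ᵀ, G_σ := ∇σ(x) G_R ∇σ(x)ᵀ, û := -½ R⁻¹ g(x)ᵀ ∇σ(x)ᵀ Ŵ_a, ω := ∇σ(x)(f(x) + g(x)û), and δ̂ := Ŵ_cᵀ ∇σ(x)(f(x) + g(x)û) + Q(x) + ûᵀ R û. Suppose the function V*(z) = Wᵀσ(z) + ε(z) satisfies the closed-loop HJB equation at x: ∇V*(x) f(x) - ¼ ∇V*(x) G_R ∇V*(x)ᵀ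 + Q(x) = 0. Then δ̂ = -ωᵀ(W - Ŵ_c) + ¼ (W - Ŵ_a)ᵀ G_σ (W - Ŵ_a) + Δ, where Δ := ½ Wᵀ ∇σ(x) G_R ∇ε(x)ᵀ + ¼ ∇ε(x) G_R ∇ε(x)ᵀ - ∇ε(x) f(x). -/
open Matrix

/-- Bellman-error identity: substituting the actor–critic approximations into the
HJB equation, the Bellman error `δ̂` equals `-ωᵀW̃_c + ¼ W̃_aᵀ G_σ W̃_a + Δ`,
where `W̃_c = W - Ŵ_c`, `W̃_a = W - Ŵ_a`, and `Δ` depends only on the ideal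
weights and the reconstruction error. -/
theorem stmt_16 {n m L : ℕ} (x : Fin n → ℝ)
    (f : (Fin n → ℝ) → Fin n → ℝ)
    (g : (Fin n → ℝ) → Matrix (Fin n) (Fin m) ℝ)
    (Q : (Fin n → ℝ) → ℝ)
    (R : Matrix (Fin m) (Fin m) ℝ) (hR : R.PosDef)
    (σ : (Fin n → ℝ) → Fin L → ℝ) (ε : (Fin n → ℝ) → ℝ)
    (hσ : ContDiff ℝ 1 σ) (hε : ContDiff ℝ 1 ε)
    (W Wc Wa : Fin L → ℝ) :
    -- Jacobian `∇σ(x)` and gradient `∇ε(x)`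
    let Dσ : Matrix (Fin L) (Fin n) ℝ :=
      Matrix.of fun i j => fderiv ℝ (fun z => σ z i) x (Pi.single j 1)
    let Dε : Fin n → ℝ := fun j => fderiv ℝ ε x (Pi.single j 1)
    let GR : Matrix (Fin n) (Fin n) ℝ := g x * R⁻¹ * (g x).transpose
    let Gσ : Matrix (Fin L) (Fin L) ℝ := Dσ * GR * Dσ.transpose
    let uhat : Fin m → ℝ :=
      -(1 / 2 : ℝ) • R⁻¹.mulVec ((g x).transpose.mulVec (Dσ.transpose.mulVec Wa))
    let ω : Fin L → ℝ := Dσ.mulVec (f x + (g x).mulVec uhat)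
    let δhat : ℝ := Wc ⬝ᵥ ω + Q x + uhat ⬝ᵥ R.mulVec uhat
    -- gradient of `V* = Wᵀσ + ε` at `x`
    let gradV : Fin n → ℝ := Matrix.vecMul W Dσ + Dε
    -- closed-loop HJB equation at `x`
    gradV ⬝ᵥ f x - (1 / 4 : ℝ) * (gradV ⬝ᵥ GR.mulVec gradV) + Q x = 0 →
    δhat = -(ω ⬝ᵥ (W - Wc)) + (1 / 4 : ℝ) * ((W - Wa) ⬝ᵥ Gσ.mulVec (W - Wa)) +
      ((1 / 2 : ℝ) * (W ⬝ᵥ Dσ.mulVec (GR.mulVec Dε)) +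
        (1 / 4 : ℝ) * (Dε ⬝ᵥ GR.mulVec Dε) - Dε ⬝ᵥ f x) := by
  intro Dσ Dε GR Gσ uhat ω δhat gradV hjb
  have hRsym : Rᵀ = R := hR.isHermitian.eq
  have hRinv_sym : (R⁻¹)ᵀ = R⁻¹ := by
    rw [Matrix.transpose_nonsing_inv, hRsym]
  have hRunit : IsUnit R.det := isUnit_iff_ne_zero.mpr hR.det_pos.ne'
  have hRRinv : R * R⁻¹ = 1 := Matrix.mul_nonsing_inv R hRunit
  have hGRsym : GRᵀ = GR := by
    show (g x * R⁻¹ * (g x)ᵀ)ᵀ = _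
    simp [Matrix.transpose_mul, hRinv_sym, Matrix.mul_assoc]
    rw [← Matrix.mul_assoc]
  have hB : ∀ v w : Fin n → ℝ, v ⬝ᵥ GR.mulVec w = w ⬝ᵥ GR.mulVec v := by
    intro v w
    rw [Matrix.dotProduct_mulVec, ← Matrix.mulVec_transpose, hGRsym,
      dotProduct_comm]
  set p : Fin n → ℝ := Matrix.vecMul W Dσ with hp
  set c : Fin n → ℝ := Matrix.vecMul Wc Dσ with hc
  set a : Fin n → ℝ := Matrix.vecMul Wa Dσ with ha
  -- g x * uhat
  have hguh : (g x).mulVec uhat = -(1/2 : ℝ) • GR.mulVec a := by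
    show (g x).mulVec (-(1/2 : ℝ) • R⁻¹.mulVec ((g x)ᵀ.mulVec (Dσᵀ.mulVec Wa))) = _
    rw [Matrix.mulVec_transpose Dσ Wa, ← ha, Matrix.mulVec_smul,
      Matrix.mulVec_mulVec, Matrix.mulVec_mulVec]
  -- uhat ⬝ᵥ R.mulVec uhat
  have hRuh : R.mulVec uhat
      = -(1/2 : ℝ) • ((g x)ᵀ.mulVec a) := by
    show R.mulVec (-(1/2 : ℝ) • R⁻¹.mulVec ((g x)ᵀ.mulVec (Dσᵀ.mulVec Wa))) = _
    rw [Matrix.mulVec_transpose Dσ Wa, ← ha, Matrix.mulVec_smul,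
      Matrix.mulVec_mulVec, hRRinv, Matrix.one_mulVec]
  have huRu : uhat ⬝ᵥ R.mulVec uhat = (1/4 : ℝ) * (a ⬝ᵥ GR.mulVec a) := by
    rw [hRuh]
    show (-(1/2 : ℝ) • R⁻¹.mulVec ((g x)ᵀ.mulVec (Dσᵀ.mulVec Wa))) ⬝ᵥ _ = _
    rw [Matrix.mulVec_transpose Dσ Wa, ← ha]
    rw [smul_dotProduct, dotProduct_smul, smul_eq_mul, smul_eq_mul]
    have h1 : R⁻¹.mulVec ((g x)ᵀ.mulVec a) ⬝ᵥ (g x)ᵀ.mulVec a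
        = a ⬝ᵥ GR.mulVec a := by
      rw [dotProduct_comm, Matrix.mulVec_mulVec, Matrix.mulVec_transpose,
        ← Matrix.dotProduct_mulVec, Matrix.mulVec_mulVec, ← Matrix.mul_assoc]
    rw [h1]; ring
  -- ω dot products
  have hω : ∀ v : Fin L → ℝ, v ⬝ᵥ ω =
      Matrix.vecMul v Dσ ⬝ᵥ f x - (1/2 : ℝ) * (Matrix.vecMul v Dσ ⬝ᵥ GR.mulVec a) := by
    intro v
    show v ⬝ᵥ Dσ.mulVec (f x + (g x).mulVec uhat) = _
    rw [hguh, Matrix.mulVec_add, dotProduct_add, Matrix.mulVec_smul,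
      dotProduct_smul, smul_eq_mul,
      Matrix.dotProduct_mulVec v Dσ (f x),
      Matrix.dotProduct_mulVec v Dσ (GR.mulVec a)]
    ring
  -- Gσ quadratic form
  have hGσ : (W - Wa) ⬝ᵥ Gσ.mulVec (W - Wa) = (p - a) ⬝ᵥ GR.mulVec (p - a) := by
    have h1 : Dσᵀ.mulVec (W - Wa) = p - a := by
      rw [Matrix.mulVec_transpose, Matrix.sub_vecMul]
    calc (W - Wa) ⬝ᵥ Gσ.mulVec (W - Wa)
        = (W - Wa) ⬝ᵥ Dσ.mulVec (GR.mulVec (Dσᵀ.mulVec (W - Wa))) := by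
          show (W - Wa) ⬝ᵥ (Dσ * GR * Dσᵀ).mulVec (W - Wa) = _
          rw [← Matrix.mulVec_mulVec, ← Matrix.mulVec_mulVec]
      _ = (p - a) ⬝ᵥ GR.mulVec (p - a) := by
          rw [h1, Matrix.dotProduct_mulVec, Matrix.sub_vecMul]
  have hΔ1 : W ⬝ᵥ Dσ.mulVec (GR.mulVec Dε) = p ⬝ᵥ GR.mulVec Dε := by
    rw [Matrix.dotProduct_mulVec]
  have hWcω : Wc ⬝ᵥ ω = c ⬝ᵥ f x - (1/2 : ℝ) * (c ⬝ᵥ GR.mulVec a) := hω Wc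
  have hωW : ω ⬝ᵥ (W - Wc) = (p - c) ⬝ᵥ f x
      - (1/2 : ℝ) * ((p - c) ⬝ᵥ GR.mulVec a) := by
    rw [dotProduct_comm, hω (W - Wc), Matrix.sub_vecMul]
  have hhjb : (p + Dε) ⬝ᵥ f x
      - (1/4 : ℝ) * ((p + Dε) ⬝ᵥ GR.mulVec (p + Dε)) + Q x = 0 := hjb
  show Wc ⬝ᵥ ω + Q x + uhat ⬝ᵥ R.mulVec uhat = _
  rw [hWcω, huRu, hωW, hGσ, hΔ1]
  have hQ : Q x = -((p + Dε) ⬝ᵥ f x) + (1/4 : ℝ) * ((p + Dε) ⬝ᵥ GR.mulVec (p + Dε)) := by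
    linarith
  rw [hQ]
  simp only [add_dotProduct, sub_dotProduct, Matrix.mulVec_add, Matrix.mulVec_sub,
    dotProduct_add, dotProduct_sub]
  have h1 := hB p a
  have h2 := hB p Dε
  have h3 := hB Dε a
  ring_nf
  linarith
end
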